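/- arXiv:2101.10488 — 2 statements merged into one kernel-verified Lean document; each statement's English description precedes it below -/
import Mathlib

section
/- The reverse derivative combinator on polynomial tuples over Z₂ satisfies the chain rule direction of RD.5: for polynomial maps f : Z₂^a → Z₂^b and g : Z₂^b → Z₂^c given by tuples of polynomials, R[f;g](x, δ) = R[f](x, R[g](f(x), δ)), where R[h] for a polynomial map h : Z₂^m → Z₂^n is the map Z₂^m × Z₂^n → Z₂^m whose i-th component is Σⱼ (∂hⱼ/∂xᵢ)(x)·δⱼ. -/
open MvPolynomial

/-- Chain rule for the formal partial derivative of a composed polynomial over Z₂. -/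
lemma pderiv_bind₁_chain {m n : ℕ} (f : Fin n → MvPolynomial (Fin m) (ZMod 2))
    (i : Fin m) (p : MvPolynomial (Fin n) (ZMod 2)) :
    pderiv i (bind₁ f p) = ∑ j, bind₁ f (pderiv j p) * pderiv i (f j) := by
  induction p using MvPolynomial.induction_on with
  | C a => simp
  | add p q hp hq => simp [hp, hq, add_mul, Finset.sum_add_distrib]
  | mul_X p k hp =>
      simp only [map_mul, bind₁_X_right, Derivation.leibniz, smul_eq_mul, hp, pderiv_X,
        Pi.single_apply, map_add, apply_ite (bind₁ f), map_one, map_zero, ite_mul, one_mul,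
        zero_mul, add_mul, Finset.sum_add_distrib, mul_ite, mul_zero, Finset.mul_sum]
      congr 1
      · rw [Finset.sum_eq_single k] <;> simp +contextual [eq_comm]
      · exact Finset.sum_congr rfl fun j _ => by ring

/-- The formal reverse derivative of a tuple of polynomials:
R[h](x, δ)ᵢ = Σⱼ (∂hⱼ/∂xᵢ)(x)·δⱼ. -/
noncomputable def revDeriv {m n : ℕ} (h : Fin n → MvPolynomial (Fin m) (ZMod 2))
    (x : Fin m → ZMod 2) (δ : Fin n → ZMod 2) : Fin m → ZMod 2 :=
  fun i => ∑ j, eval x (pderiv i (h j)) * δ j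

/-- Chain rule (RD.5) for the reverse derivative of polynomial maps over Z₂:
R[f;g](x, δ) = R[f](x, R[g](f(x), δ)). -/
theorem stmt_13 (a b c : ℕ)
    (f : Fin b → MvPolynomial (Fin a) (ZMod 2))
    (g : Fin c → MvPolynomial (Fin b) (ZMod 2))
    (x : Fin a → ZMod 2) (δ : Fin c → ZMod 2) :
    revDeriv (fun j => bind₁ f (g j)) x δ =
      revDeriv f x (revDeriv g (fun k => eval x (f k)) δ) := by
  funext i
  simp only [revDeriv, pderiv_bind₁_chain, map_sum, map_mul, Finset.sum_mul, Finset.mul_sum]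
  rw [Finset.sum_comm]
  refine Finset.sum_congr rfl fun k _ => Finset.sum_congr rfl fun j _ => ?_
  have : eval x (bind₁ f (pderiv k (g j))) =
      eval (fun t => eval x (f t)) (pderiv k (g j)) := by
    simp only [eval, eval₂Hom_bind₁]
  rw [this]; ring
end

section
/- The brute-force reverse derivative of a boolean function requires exactly the stated evaluations and is correct on multilinear representatives: for f : Z₂^a → Z₂^b arising as evaluation of a tuple of multilinear polynomials p, the brute-force reverse derivative R_B[f](x, δ)ᵢ = Σⱼ (f(x)ⱼ + f(x + eᵢ)ⱼ)·δⱼ coincides with the formal reverse derivative R[p](x, δ)ᵢ = Σⱼ (∂pⱼ/∂xᵢ)(x)·δⱼ. -/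
open MvPolynomial

private lemma eval_shift_of_not_dep {a : ℕ} (i : Fin a) (x : Fin a → ZMod 2)
    (m : Fin a →₀ ℕ) (c : ZMod 2) (h : m i = 0) :
    eval (x + Pi.single i 1) (monomial m c) = eval x (monomial m c) := by
  rw [eval_monomial, eval_monomial]
  congr 1
  apply Finsupp.prod_congr
  intro k hk
  have hki : k ≠ i := by
    rintro rfl
    exact (Finsupp.mem_support_iff.mp hk) h
  simp [Pi.single_eq_of_ne hki]

private lemma key {a : ℕ} (i : Fin a) (x : Fin a → ZMod 2)
    (m : Fin a →₀ ℕ) (c : ZMod 2) (h : m i ≤ 1) :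
    eval x (monomial m c) + eval (x + Pi.single i 1) (monomial m c) =
      eval x (pderiv i (monomial m c)) := by
  interval_cases hm : m i
  · rw [eval_shift_of_not_dep i x m c hm, pderiv_monomial, hm]
    simp
    ring_nf
    simp [CharTwo.two_eq_zero]
  · set m' := m - Finsupp.single i 1 with hm'
    have hmi' : m' i = 0 := by simp [hm', hm]
    have hsum : Finsupp.single i 1 + m' = m := by
      ext k
      by_cases hk : k = i
      · subst hk; simp [hm', hm]
      · simp [hm', Finsupp.single_eq_of_ne' (Ne.symm hk)]
    have hmono : monomial m c = X i * monomial m' c := by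
      rw [X, monomial_mul, one_mul, hsum]
    rw [hmono]
    have hd : pderiv i (monomial m' c) = 0 := by
      rw [pderiv_monomial, hmi']
      simp
    rw [pderiv_mul, pderiv_X, hd]
    simp only [mul_zero, add_zero, Pi.single_eq_same]
    rw [map_mul, map_mul, eval_shift_of_not_dep i x m' c hmi']
    simp only [eval_X, eval_mul, one_mul, Pi.add_apply, Pi.single_eq_same]
    ring_nf
    rw [show (2:ZMod 2) = 0 from rfl]
    ring

/-- The brute-force reverse derivative coincides with the formal reverse derivative on
multilinear polynomial representatives:
Σⱼ (f(x)ⱼ + f(x + eᵢ)ⱼ)·δⱼ = Σⱼ (∂pⱼ/∂xᵢ)(x)·δⱼ. -/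
theorem stmt_18 (a b : ℕ) (p : Fin b → MvPolynomial (Fin a) (ZMod 2))
    (hp : ∀ j, ∀ m ∈ (p j).support, ∀ i, m i ≤ 1)
    (f : (Fin a → ZMod 2) → (Fin b → ZMod 2)) (hf : ∀ x j, f x j = eval x (p j))
    (x : Fin a → ZMod 2) (δ : Fin b → ZMod 2) (i : Fin a) :
    ∑ j, (f x j + f (x + Pi.single i 1) j) * δ j =
      ∑ j, eval x (pderiv i (p j)) * δ j := by
  refine Finset.sum_congr rfl fun j _ => ?_
  congr 1
  rw [hf, hf]
  have he : ∀ y : Fin a → ZMod 2,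
      eval y (p j) = ∑ m ∈ (p j).support, eval y (monomial m (coeff m (p j))) := by
    intro y
    conv_lhs => rw [(p j).as_sum]
    rw [map_sum]
  have hd : eval x (pderiv i (p j)) =
      ∑ m ∈ (p j).support, eval x (pderiv i (monomial m (coeff m (p j)))) := by
    conv_lhs => rw [(p j).as_sum]
    rw [map_sum, map_sum]
  rw [he, he, hd, ← Finset.sum_add_distrib]
  refine Finset.sum_congr rfl fun m hm => ?_
  exact key i x m _ (hp j m hm i)
end
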